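/- Let μ, ν be compactly supported probability measures on ℝ with subordination function ω satisfying G_{μ⊞ν}(z) = G_μ(ω(z)) on ℂ⁺, continuously extended to the real line. Then for every real z > r(μ⊞ν), the imaginary part of ω(z) is zero. -/

import Mathlib

open MeasureTheory Filter Topology

noncomputable def rEdge (μ : Measure ℝ) : ℝ := sInf {r : ℝ | μ (Set.Ioi r) = 0}

def suppBdd (μ : Measure ℝ) : Prop := ∃ R : ℝ, μ {y : ℝ | R < |y|} = 0

noncomputable def stG (μ : Measure ℝ) (l : ℝ) : ℝ := ∫ y, (l - y)⁻¹ ∂μ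

/-- Complex Stieltjes transform G_μ(z) = ∫ 1/(z−t) dμ(t). -/
noncomputable def stGC (μ : Measure ℝ) (z : ℂ) : ℂ := ∫ t, (z - (t : ℂ))⁻¹ ∂μ

def IsFreeConv (μab μ ν : Measure ℝ) : Prop :=
  ∃ (K Ka Kb : ℝ → ℝ) (ε : ℝ), 0 < ε ∧
    ∀ u ∈ Set.Ioo (0 : ℝ) ε,
      (rEdge μab < K u ∧ stG μab (K u) = u) ∧
      (rEdge μ < Ka u ∧ stG μ (Ka u) = u) ∧
      (rEdge ν < Kb u ∧ stG ν (Kb u) = u) ∧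
      K u = Ka u + Kb u - 1 / u

/-- Outside the right edge the measure vanishes. -/
lemma rEdge_null (μ : Measure ℝ) (hc : suppBdd μ) : μ (Set.Ioi (rEdge μ)) = 0 := by
  obtain ⟨R, hR⟩ := hc
  have hRmem : μ (Set.Ioi R) = 0 := by
    refine measure_mono_null ?_ hR
    intro y hy
    have : R < y := hy
    have : R < |y| := lt_of_lt_of_le this (le_abs_self y)
    exact this
  have hne : ({r : ℝ | μ (Set.Ioi r) = 0}).Nonempty := ⟨R, hRmem⟩
  have hstep : ∀ ε : ℝ, 0 < ε → μ (Set.Ioi (rEdge μ + ε)) = 0 := by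
    intro ε hε
    by_contra hcon
    have hlb : ∀ r ∈ {r : ℝ | μ (Set.Ioi r) = 0}, rEdge μ + ε ≤ r := by
      intro r hr
      by_contra hlt
      push_neg at hlt
      exact hcon (measure_mono_null (Set.Ioi_subset_Ioi hlt.le) hr)
    have : rEdge μ + ε ≤ rEdge μ := le_csInf hne hlb
    linarith
  have hsub : Set.Ioi (rEdge μ) ⊆ ⋃ n : ℕ, Set.Ioi (rEdge μ + ((n : ℝ) + 1)⁻¹) := by
    intro t ht
    obtain ⟨n, hn⟩ := exists_nat_one_div_lt (sub_pos.mpr ht : (0:ℝ) < t - rEdge μ)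
    refine Set.mem_iUnion.mpr ⟨n, ?_⟩
    have : ((n : ℝ) + 1)⁻¹ < t - rEdge μ := by
      simpa [one_div] using hn
    simpa using by linarith [this]
  refine measure_mono_null hsub (measure_iUnion_null fun n => hstep _ (by positivity))

/-- Integrability of the resolvent kernel off the real axis. -/
lemma integrable_res (μ : Measure ℝ) [IsFiniteMeasure μ] {z : ℂ} (hz : z.im ≠ 0) :
    Integrable (fun t : ℝ => (z - (t : ℂ))⁻¹) μ := by
  have hne : ∀ t : ℝ, z - (t : ℂ) ≠ 0 := by
    intro t h
    apply hz
    have hzt : z = (t : ℂ) := sub_eq_zero.mp h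
    rw [hzt]; simp
  have hcont : Continuous fun t : ℝ => (z - (t : ℂ))⁻¹ :=
    (continuous_const.sub Complex.continuous_ofReal).inv₀ hne
  refine Integrable.mono' (integrable_const (|z.im|⁻¹)) hcont.aestronglyMeasurable
    (ae_of_all _ fun t => ?_)
  rw [norm_inv]
  have hle : |z.im| ≤ ‖z - (t : ℂ)‖ := by
    have h := Complex.abs_im_le_norm (z - (t : ℂ))
    simpa [Complex.sub_im, Complex.ofReal_im] using h
  exact inv_anti₀ (abs_pos.mpr hz) hle

/-- The imaginary part of the Stieltjes transform is negative on the upper half plane. -/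
lemma im_stGC_neg (μ : Measure ℝ) [IsProbabilityMeasure μ] {w : ℂ} (hw : 0 < w.im) :
    (stGC μ w).im < 0 := by
  have hint : Integrable (fun t : ℝ => (w - (t : ℂ))⁻¹) μ := integrable_res μ (ne_of_gt hw)
  have h1 : (stGC μ w).im = ∫ t, ((w - (t : ℂ))⁻¹).im ∂μ := (integral_im hint).symm
  have hne : ∀ t : ℝ, w - (t : ℂ) ≠ 0 := by
    intro t h
    have hzt : w = (t : ℂ) := sub_eq_zero.mp h
    rw [hzt] at hw; simp at hw
  have heq : ∀ t : ℝ, ((w - (t : ℂ))⁻¹).im = -(w.im / Complex.normSq (w - (t : ℂ))) := by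
    intro t
    rw [Complex.inv_im]
    simp [Complex.sub_im, Complex.ofReal_im, neg_div]
  have hgcont : Continuous fun t : ℝ => w.im / Complex.normSq (w - (t : ℂ)) := by
    apply continuous_const.div
    · exact Complex.continuous_normSq.comp (continuous_const.sub Complex.continuous_ofReal)
    · intro t
      exact ne_of_gt (Complex.normSq_pos.mpr (hne t))
  have hgint : Integrable (fun t : ℝ => w.im / Complex.normSq (w - (t : ℂ))) μ := by
    refine Integrable.mono' (integrable_const (w.im / w.im ^ 2)) hgcont.aestronglyMeasurable
      (ae_of_all _ fun t => ?_)
    have hpos : 0 < Complex.normSq (w - (t : ℂ)) := Complex.normSq_pos.mpr (hne t)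
    have hge : w.im ^ 2 ≤ Complex.normSq (w - (t : ℂ)) := by
      rw [Complex.normSq_apply]
      simp only [Complex.sub_im, Complex.ofReal_im, sub_zero, Complex.sub_re, Complex.ofReal_re]
      nlinarith [sq_nonneg ((w.re - t))]
    have h0 : 0 ≤ w.im / Complex.normSq (w - (t : ℂ)) := div_nonneg hw.le hpos.le
    rw [Real.norm_eq_abs, abs_of_nonneg h0]
    exact div_le_div_of_nonneg_left hw.le (by positivity) hge
  have hkey : 0 < ∫ t, w.im / Complex.normSq (w - (t : ℂ)) ∂μ := by
    rw [integral_pos_iff_support_of_nonneg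
      (fun t => div_nonneg hw.le (Complex.normSq_pos.mpr (hne t)).le) hgint]
    have hsupp : Function.support (fun t : ℝ => w.im / Complex.normSq (w - (t : ℂ))) = Set.univ := by
      ext t
      simp only [Function.mem_support, Set.mem_univ, iff_true]
      exact ne_of_gt (div_pos hw (Complex.normSq_pos.mpr (hne t)))
    rw [hsupp]
    simp
  rw [h1]
  calc ∫ t, ((w - (t : ℂ))⁻¹).im ∂μ
      = ∫ t, -(w.im / Complex.normSq (w - (t : ℂ))) ∂μ := by
        exact integral_congr_ae (ae_of_all _ heq)
    _ = -∫ t, w.im / Complex.normSq (w - (t : ℂ)) ∂μ := integral_neg _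
    _ < 0 := neg_neg_iff_pos.mpr hkey

/-- If neither μ nor ν is a point mass and ω is the subordination function
    (analytic on ℂ⁺, mapping ℂ⁺ to ℂ⁺, continuous up to the boundary, with
    G_{μ⊞ν} = G_μ ∘ ω on ℂ⁺), then Im ω(z) = 0 for every real z > r(μ⊞ν). -/
theorem stmt11 (μ ν μab : Measure ℝ) [IsProbabilityMeasure μ]
    [IsProbabilityMeasure ν] [IsProbabilityMeasure μab]
    (hcμ : suppBdd μ) (hcν : suppBdd ν) (hcab : suppBdd μab)
    (hfc : IsFreeConv μab μ ν)
    (hμnd : ¬ ∃ c : ℝ, μ = Measure.dirac c)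
    (hνnd : ¬ ∃ c : ℝ, ν = Measure.dirac c)
    (ω : ℂ → ℂ)
    (hωan : AnalyticOn ℂ ω {z : ℂ | 0 < z.im})
    (hωmap : ∀ z : ℂ, 0 < z.im → 0 < (ω z).im)
    (hωcont : ContinuousOn ω {z : ℂ | 0 ≤ z.im})
    (hsub : ∀ z : ℂ, 0 < z.im → stGC μab z = stGC μ (ω z)) :
    ∀ x : ℝ, rEdge μab < x → (ω ((x : ℝ) : ℂ)).im = 0 := by
  intro x hx
  set b := rEdge μab with hbdef
  have hnull : μab (Set.Ioi b) = 0 := rEdge_null μab hcab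
  have hae : ∀ᵐ t ∂μab, t ≤ b := by
    have hset : {t : ℝ | ¬ t ≤ b} = Set.Ioi b := by ext t; simp [not_le]
    rw [ae_iff, hset]; exact hnull
  by_contra him
  have hxb : (0 : ℝ) < x - b := sub_pos.mpr hx
  -- the approximating sequence
  set z : ℕ → ℂ := fun n => (x : ℂ) + Complex.I * (((n : ℝ) + 1)⁻¹ : ℝ) with hzdef
  have hzim : ∀ n, (z n).im = ((n : ℝ) + 1)⁻¹ := by
    intro n; simp [hzdef, -Complex.ofReal_inv]
  have hzimpos : ∀ n, 0 < (z n).im := fun n => by rw [hzim]; positivity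
  have hzre : ∀ n, (z n).re = x := by intro n; simp [hzdef]
  have hseq0 : Tendsto (fun n : ℕ => ((n : ℝ) + 1)⁻¹) atTop (𝓝 0) := by
    simpa [one_div] using tendsto_one_div_add_atTop_nhds_zero_nat (𝕜 := ℝ)
  have hztend : Tendsto z atTop (𝓝 ((x : ℝ) : ℂ)) := by
    have h0 : Tendsto (fun n : ℕ => ((((n : ℝ) + 1)⁻¹ : ℝ) : ℂ)) atTop (𝓝 (((0 : ℝ) : ℂ))) :=
      (Complex.continuous_ofReal.tendsto 0).comp hseq0
    have h1 : Tendsto (fun n : ℕ => (x : ℂ) + Complex.I * ((((n : ℝ) + 1)⁻¹ : ℝ) : ℂ)) atTop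
        (𝓝 ((x : ℂ) + Complex.I * (((0 : ℝ) : ℝ) : ℂ))) :=
      tendsto_const_nhds.add (tendsto_const_nhds.mul h0)
    simpa [hzdef] using h1
  set w := ω ((x : ℝ) : ℂ) with hwdef
  have hωtend : Tendsto (fun n => ω (z n)) atTop (𝓝 w) := by
    have hcw : ContinuousWithinAt ω {ζ : ℂ | 0 ≤ ζ.im} ((x : ℝ) : ℂ) :=
      hωcont _ (by simp)
    refine hcw.tendsto.comp ?_
    rw [tendsto_nhdsWithin_iff]
    exact ⟨hztend, Eventually.of_forall fun n => (hzimpos n).le⟩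
  have hwim0 : 0 ≤ w.im := by
    have hti : Tendsto (fun n => (ω (z n)).im) atTop (𝓝 w.im) :=
      (Complex.continuous_im.tendsto w).comp hωtend
    exact ge_of_tendsto' hti (fun n => (hωmap _ (hzimpos n)).le)
  have hwim : 0 < w.im := lt_of_le_of_ne hwim0 (Ne.symm him)
  -- continuity of stGC μ at w
  have hev : ∀ᶠ ζ : ℂ in 𝓝 w, w.im / 2 < ζ.im := by
    have ho : IsOpen {ζ : ℂ | w.im / 2 < ζ.im} := isOpen_lt continuous_const Complex.continuous_im
    exact ho.mem_nhds (by simp; linarith)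
  have hcontG : ContinuousAt (stGC μ) w := by
    apply continuousAt_of_dominated (bound := fun _ : ℝ => (w.im / 2)⁻¹)
    · filter_upwards [hev] with ζ hζ
      have : (0 : ℝ) < ζ.im := lt_trans (by positivity) hζ
      exact (integrable_res μ (ne_of_gt this)).aestronglyMeasurable
    · filter_upwards [hev] with ζ hζ
      refine ae_of_all _ fun t => ?_
      rw [norm_inv]
      have hle : w.im / 2 ≤ ‖ζ - (t : ℂ)‖ := by
        have h := Complex.abs_im_le_norm (ζ - (t : ℂ))
        have h2 : |ζ.im| ≤ ‖ζ - (t : ℂ)‖ := by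
          simpa [Complex.sub_im, Complex.ofReal_im] using h
        have : ζ.im ≤ |ζ.im| := le_abs_self _
        linarith
      exact inv_anti₀ (by positivity) hle
    · exact integrable_const _
    · refine ae_of_all _ fun t => ?_
      have hne : w - (t : ℂ) ≠ 0 := by
        intro h
        have hzt : w = (t : ℂ) := sub_eq_zero.mp h
        rw [hzt] at hwim; simp at hwim
      exact ((continuousAt_id.sub continuousAt_const).inv₀ hne)
  have hGtend : Tendsto (fun n => (stGC μab (z n)).im) atTop (𝓝 (stGC μ w).im) := by
    have h1 : Tendsto (fun n => stGC μ (ω (z n))) atTop (𝓝 (stGC μ w)) :=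
      hcontG.tendsto.comp hωtend
    have h2 : (fun n => (stGC μab (z n)).im) = fun n => (stGC μ (ω (z n))).im := by
      funext n; rw [hsub _ (hzimpos n)]
    rw [h2]
    exact (Complex.continuous_im.tendsto _).comp h1
  -- squeeze Im G_{μab}(z n) to 0
  have hbd : ∀ n, |(stGC μab (z n)).im| ≤ ((n : ℝ) + 1)⁻¹ / (x - b) ^ 2 := by
    intro n
    have hint : Integrable (fun t : ℝ => (z n - (t : ℂ))⁻¹) μab :=
      integrable_res μab (ne_of_gt (hzimpos n))
    have h1 : (stGC μab (z n)).im = ∫ t, ((z n - (t : ℂ))⁻¹).im ∂μab := (integral_im hint).symm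
    rw [h1]
    have habs : |∫ t, ((z n - (t : ℂ))⁻¹).im ∂μab| ≤ ∫ t, |((z n - (t : ℂ))⁻¹).im| ∂μab := by
      simpa only [Real.norm_eq_abs] using
        norm_integral_le_integral_norm (fun t : ℝ => ((z n - (t : ℂ))⁻¹).im) (μ := μab)
    refine le_trans habs ?_
    have hmono : ∫ t, |((z n - (t : ℂ))⁻¹).im| ∂μab
        ≤ ∫ _t, ((n : ℝ) + 1)⁻¹ / (x - b) ^ 2 ∂μab := by
      refine integral_mono_ae hint.im.abs (integrable_const _) ?_
      filter_upwards [hae] with t ht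
      have hnepos : 0 < Complex.normSq (z n - (t : ℂ)) := by
        apply Complex.normSq_pos.mpr
        intro h
        have hzt : z n = (t : ℂ) := sub_eq_zero.mp h
        have := hzimpos n
        rw [hzt] at this; simp at this
      have heq : ((z n - (t : ℂ))⁻¹).im = -((z n).im / Complex.normSq (z n - (t : ℂ))) := by
        rw [Complex.inv_im]
        simp [Complex.sub_im, Complex.ofReal_im, neg_div]
      rw [heq, abs_neg, abs_of_nonneg (div_nonneg (hzimpos n).le hnepos.le)]
      have hge : (x - b) ^ 2 ≤ Complex.normSq (z n - (t : ℂ)) := by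
        rw [Complex.normSq_apply]
        simp only [Complex.sub_im, Complex.ofReal_im, sub_zero, Complex.sub_re,
          Complex.ofReal_re, hzre]
        have h1 : x - b ≤ x - t := by linarith
        nlinarith [sq_nonneg ((z n).im), hxb]
      have := div_le_div_of_nonneg_left (hzimpos n).le (by positivity : (0:ℝ) < (x - b) ^ 2) hge
      calc (z n).im / Complex.normSq (z n - (t : ℂ))
          ≤ (z n).im / (x - b) ^ 2 := this
        _ = ((n : ℝ) + 1)⁻¹ / (x - b) ^ 2 := by rw [hzim]
    refine le_trans hmono ?_
    simp [measure_univ]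
  have hG0 : Tendsto (fun n => (stGC μab (z n)).im) atTop (𝓝 0) := by
    have hg : Tendsto (fun n : ℕ => ((n : ℝ) + 1)⁻¹ / (x - b) ^ 2) atTop (𝓝 0) := by
      have := hseq0.div_const ((x - b) ^ 2)
      simpa using this
    exact squeeze_zero_norm (f := fun n => (stGC μab (z n)).im)
      (fun n => by simpa only [Real.norm_eq_abs] using hbd n) hg
  have hzero : (stGC μ w).im = 0 := tendsto_nhds_unique hGtend hG0
  exact absurd hzero (ne_of_lt (im_stGC_neg μ hwim))
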